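/- arXiv:0709.3241 — 3 statements merged into one kernel-verified Lean document; each statement's English description precedes it below -/
import Mathlib

section
/- Let a = (aₙ) be a bounded complex sequence such that the set of shifted sequences {σᵏa : k ∈ ℤ} is relatively compact in ℓ^∞(ℤ) (where (σᵏa)ₙ = a_{n+k}). Then for any two sequences of intervals whose lengths tend to infinity, the averages (1/|I_j|) Σ_{n∈I_j} aₙ converge and the limits agree; i.e. the mean Av(a) exists. -/
open Filter Topology

namespace Stmt10
noncomputable section
variable (a : BoundedContinuousFunction ℤ ℂ)

def S (L : ℕ) (M : ℤ) : ℂ := ∑ j ∈ Finset.range L, a (M + j)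

def avg (L : ℕ) (M : ℤ) : ℂ := S a L M / L

lemma S_succ_shift (L : ℕ) (x : ℤ) :
    S a L (x + 1) + a x = S a L x + a (x + (L : ℤ)) := by
  have h1 : S a (L+1) x = S a L x + a (x + (L:ℤ)) := by
    simp [S, Finset.sum_range_succ]
  have h2 : S a (L+1) x = a x + S a L (x + 1) := by
    simp only [S, Finset.sum_range_succ']
    rw [add_comm]
    congr 1
    · simp
    · apply Finset.sum_congr rfl; intro j _; congr 1; push_cast; ring
  rw [← h1, h2]; ring

lemma norm_S_shift_nat (L : ℕ) (x : ℤ) (d : ℕ) :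
    ‖S a L (x + d) - S a L x‖ ≤ 2 * ‖a‖ * d := by
  induction d with
  | zero => simp
  | succ d ih =>
    have key := S_succ_shift a L (x + d)
    have hdiff : S a L (x + d + 1) - S a L (x + d) = a (x + d + (L:ℤ)) - a (x + d) := by
      linear_combination key
    have hx : (x + ((d:ℤ)+1)) = (x + d) + 1 := by ring
    calc ‖S a L (x + ((d:ℕ)+1:ℕ)) - S a L x‖
        ≤ ‖S a L (x + ((d:ℕ)+1:ℕ)) - S a L (x + d)‖ + ‖S a L (x + d) - S a L x‖ :=
          norm_sub_le_norm_sub_add_norm_sub _ _ _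
      _ ≤ 2 * ‖a‖ + 2 * ‖a‖ * d := by
          refine add_le_add ?_ ih
          push_cast
          rw [hx, hdiff]
          calc ‖a (x + d + (L:ℤ)) - a (x + d)‖ ≤ ‖a (x+d+(L:ℤ))‖ + ‖a (x+d)‖ := norm_sub_le _ _
            _ ≤ ‖a‖ + ‖a‖ := add_le_add (a.norm_coe_le_norm _) (a.norm_coe_le_norm _)
            _ = 2 * ‖a‖ := by ring
      _ = 2 * ‖a‖ * ((d:ℕ)+1:ℕ) := by push_cast; ring

lemma norm_S_shift (L : ℕ) (x : ℤ) (d : ℤ) :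
    ‖S a L (x + d) - S a L x‖ ≤ 2 * ‖a‖ * |(d:ℝ)| := by
  rcases le_or_gt 0 d with hd | hd
  · have h := norm_S_shift_nat a L x d.toNat
    have h1 : ((d.toNat : ℤ) : ℝ) = |(d:ℝ)| := by
      rw [Int.toNat_of_nonneg hd, abs_of_nonneg (by exact_mod_cast hd)]
    rw [Int.cast_natCast] at h1
    rw [h1] at h
    rwa [Int.toNat_of_nonneg hd] at h
  · have h := norm_S_shift_nat a L (x + d) (-d).toNat
    rw [Int.toNat_of_nonneg (by omega : (0:ℤ) ≤ -d), show x + d + -d = x by ring,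
      norm_sub_rev] at h
    have h1 : (((-d).toNat : ℤ) : ℝ) = |(d:ℝ)| := by
      rw [Int.toNat_of_nonneg (by omega : (0:ℤ) ≤ -d),
        abs_of_neg (by exact_mod_cast hd : (d:ℝ) < 0)]
      push_cast; ring
    rw [Int.cast_natCast] at h1
    rwa [h1] at h

def shiftB (k : ℤ) : BoundedContinuousFunction ℤ ℂ :=
  a.compContinuous ⟨fun n => n + k, continuous_of_discreteTopology⟩

@[simp] lemma shiftB_apply (k n : ℤ) : shiftB a k n = a (n + k) := rfl

lemma syndetic
    (hcpt : IsCompact (closure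
      {b : BoundedContinuousFunction ℤ ℂ | ∃ k : ℤ, ∀ n : ℤ, b n = a (n + k)}))
    {ε : ℝ} (hε : 0 < ε) :
    ∃ C : ℝ, ∀ m : ℤ, ∃ p : ℤ, |((m - p : ℤ) : ℝ)| ≤ C ∧
      ∀ n : ℤ, ‖a (n + p) - a n‖ ≤ ε := by
  set Sset := {b : BoundedContinuousFunction ℤ ℂ | ∃ k : ℤ, ∀ n : ℤ, b n = a (n + k)}
  have htb : TotallyBounded Sset :=
    (hcpt.totallyBounded).subset subset_closure
  obtain ⟨t, hts, htfin, hcov⟩ := (totallyBounded_iff_subset).mp htb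
    {p : _ × _ | dist p.1 p.2 < ε} (Metric.dist_mem_uniformity hε)
  choose! κ hκ using fun b (hb : b ∈ Sset) => hb
  classical
  refine ⟨((htfin.toFinset.sup fun b => (κ b).natAbs : ℕ) : ℝ), fun m => ?_⟩
  have hm : shiftB a m ∈ Sset := ⟨m, fun n => rfl⟩
  obtain ⟨b, hb, hball⟩ := Set.mem_iUnion₂.mp (hcov hm)
  have hbk := hκ b (hts hb)
  have hd : dist (shiftB a m) b < ε := hball
  refine ⟨m - κ b, ?_, fun n => ?_⟩
  · have h1 : (κ b).natAbs ≤ htfin.toFinset.sup fun b => (κ b).natAbs :=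
      Finset.le_sup (f := fun b => (κ b).natAbs) (htfin.mem_toFinset.mpr hb)
    have h2 : |((m - (m - κ b) : ℤ) : ℝ)| = (((κ b).natAbs : ℕ) : ℝ) := by
      push_cast
      rw [show (m:ℝ) - (m - κ b) = (κ b : ℝ) by ring, Nat.cast_natAbs]
      push_cast; rfl
    rw [h2]; exact_mod_cast h1
  · have hdn : dist (shiftB a m (n - κ b)) (b (n - κ b)) ≤ ε :=
      le_trans (BoundedContinuousFunction.dist_coe_le_dist _) hd.le
    rw [shiftB_apply, hbk (n - κ b)] at hdn
    rw [dist_eq_norm] at hdn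
    have e1 : n - κ b + m = n + (m - κ b) := by ring
    have e2 : n - κ b + κ b = n := by ring
    rwa [e1, e2] at hdn
-- window comparison
lemma window {ε C : ℝ} (hC : 0 ≤ C)
    (hsyn : ∀ m : ℤ, ∃ p : ℤ, |((m - p : ℤ) : ℝ)| ≤ C ∧
      ∀ n : ℤ, ‖a (n + p) - a n‖ ≤ ε)
    (L : ℕ) (M M' : ℤ) :
    ‖S a L M - S a L M'‖ ≤ L * ε + 2 * ‖a‖ * C := by
  obtain ⟨p, hp, hap⟩ := hsyn (M' - M)
  have h1 : ‖S a L M - S a L (M + p)‖ ≤ L * ε := by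
    have : S a L M - S a L (M + p) = ∑ j ∈ Finset.range L, (a (M + j) - a ((M + j) + p)) := by
      rw [Finset.sum_sub_distrib]
      congr 1
      apply Finset.sum_congr rfl
      intro j _
      congr 1
      ring
    rw [this]
    calc ‖∑ j ∈ Finset.range L, (a (M + j) - a ((M + j) + p))‖
        ≤ ∑ j ∈ Finset.range L, ‖a (M + j) - a ((M + j) + p)‖ := norm_sum_le _ _
      _ ≤ ∑ _j ∈ Finset.range L, ε := by
          apply Finset.sum_le_sum
          intro j _
          rw [norm_sub_rev]
          exact hap (M + j)
      _ = L * ε := by simp [mul_comm]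
  have h2 : ‖S a L (M + p) - S a L M'‖ ≤ 2 * ‖a‖ * C := by
    have e : M' = (M + p) + (M' - M - p) := by ring
    rw [norm_sub_rev, e]
    calc ‖S a L ((M + p) + (M' - M - p)) - S a L (M + p)‖
        ≤ 2 * ‖a‖ * |((M' - M - p : ℤ) : ℝ)| := by
          have := norm_S_shift a L (M + p) (M' - M - p)
          convert this using 3 <;> push_cast <;> ring
      _ ≤ 2 * ‖a‖ * C := by
          apply mul_le_mul_of_nonneg_left _ (by positivity)
          have : ((M' - M - p : ℤ) : ℝ) = ((M' - M) - p : ℤ) := by push_cast; ring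
          rw [this]
          exact hp
  calc ‖S a L M - S a L M'‖ ≤ ‖S a L M - S a L (M+p)‖ + ‖S a L (M+p) - S a L M'‖ :=
        norm_sub_le_norm_sub_add_norm_sub _ _ _
    _ ≤ L * ε + 2 * ‖a‖ * C := add_le_add h1 h2

lemma slide (L L' : ℕ) (M : ℤ) :
    ∑ k ∈ Finset.range L', S a L (M + k) = ∑ j ∈ Finset.range L, S a L' (M + j) := by
  simp only [S]
  rw [Finset.sum_comm]
  apply Finset.sum_congr rfl
  intro j _
  apply Finset.sum_congr rfl
  intro k _
  congr 1
  ring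

lemma avg_cmp {ε C : ℝ} (hε : 0 ≤ ε) (hC : 0 ≤ C)
    (hsyn : ∀ m : ℤ, ∃ p : ℤ, |((m - p : ℤ) : ℝ)| ≤ C ∧
      ∀ n : ℤ, ‖a (n + p) - a n‖ ≤ ε)
    (L L' : ℕ) (hL : 1 ≤ L) (hL' : 1 ≤ L') (M M' : ℤ) :
    ‖avg a L M - avg a L' M'‖ ≤ 3 * ε + 2 * (2 * ‖a‖ * C) / L + (2 * ‖a‖ * C) / L' := by
  set B := 2 * ‖a‖ * C with hB
  have hB0 : 0 ≤ B := by positivity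
  have hLpos : (0:ℝ) < L := by exact_mod_cast hL
  have hL'pos : (0:ℝ) < L' := by exact_mod_cast hL'
  -- first: same length, different start
  have step1 : ‖avg a L M - avg a L M'‖ ≤ ε + B / L := by
    have := window a hC hsyn L M M'
    rw [avg, avg, div_sub_div_same]
    rw [norm_div]
    have hnL : ‖(L:ℂ)‖ = (L:ℝ) := Complex.norm_natCast L
    rw [hnL, div_le_iff₀ hLpos]
    calc ‖S a L M - S a L M'‖ ≤ L * ε + B := this
      _ = (ε + B / L) * L := by field_simp
  -- second: same start, different length
  have step2 : ‖avg a L M' - avg a L' M'‖ ≤ 2 * ε + B / L + B / L' := by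
    have e1 : (L':ℂ) * S a L M' - ∑ k ∈ Finset.range L', S a L (M' + k)
        = ∑ k ∈ Finset.range L', (S a L M' - S a L (M' + k)) := by
      rw [Finset.sum_sub_distrib, Finset.sum_const, Finset.card_range, nsmul_eq_mul]
    have b1 : ‖(L':ℂ) * S a L M' - ∑ k ∈ Finset.range L', S a L (M' + k)‖
        ≤ L' * (L * ε + B) := by
      rw [e1]
      calc ‖∑ k ∈ Finset.range L', (S a L M' - S a L (M' + k))‖
          ≤ ∑ k ∈ Finset.range L', ‖S a L M' - S a L (M' + k)‖ := norm_sum_le _ _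
        _ ≤ ∑ _k ∈ Finset.range L', (L * ε + B) := by
            exact Finset.sum_le_sum fun k _ => window a hC hsyn L M' (M' + k)
        _ = L' * (L * ε + B) := by simp; ring
    have e2 : (L:ℂ) * S a L' M' - ∑ j ∈ Finset.range L, S a L' (M' + j)
        = ∑ j ∈ Finset.range L, (S a L' M' - S a L' (M' + j)) := by
      rw [Finset.sum_sub_distrib, Finset.sum_const, Finset.card_range, nsmul_eq_mul]
    have b2 : ‖(L:ℂ) * S a L' M' - ∑ j ∈ Finset.range L, S a L' (M' + j)‖
        ≤ L * (L' * ε + B) := by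
      rw [e2]
      calc ‖∑ j ∈ Finset.range L, (S a L' M' - S a L' (M' + j))‖
          ≤ ∑ j ∈ Finset.range L, ‖S a L' M' - S a L' (M' + j)‖ := norm_sum_le _ _
        _ ≤ ∑ _j ∈ Finset.range L, (L' * ε + B) := by
            exact Finset.sum_le_sum fun j _ => window a hC hsyn L' M' (M' + j)
        _ = L * (L' * ε + B) := by simp; ring
    have key : ‖(L':ℂ) * S a L M' - (L:ℂ) * S a L' M'‖
        ≤ L' * (L * ε + B) + L * (L' * ε + B) := by
      calc ‖(L':ℂ) * S a L M' - (L:ℂ) * S a L' M'‖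
          ≤ ‖(L':ℂ) * S a L M' - ∑ k ∈ Finset.range L', S a L (M' + k)‖
            + ‖∑ j ∈ Finset.range L, S a L' (M' + j) - (L:ℂ) * S a L' M'‖ := by
            rw [← slide a L L' M']
            exact norm_sub_le_norm_sub_add_norm_sub _ _ _
        _ ≤ L' * (L * ε + B) + L * (L' * ε + B) := by
            refine add_le_add b1 ?_
            rw [norm_sub_rev]
            exact b2
    have ediff : avg a L M' - avg a L' M'
        = ((L':ℂ) * S a L M' - (L:ℂ) * S a L' M') / ((L:ℂ) * (L':ℂ)) := by
      rw [avg, avg]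
      have h1 : (L:ℂ) ≠ 0 := by exact_mod_cast (Nat.cast_ne_zero (R := ℂ)).mpr (by omega)
      have h2 : (L':ℂ) ≠ 0 := by exact_mod_cast (Nat.cast_ne_zero (R := ℂ)).mpr (by omega)
      field_simp
    rw [ediff, norm_div]
    have hn : ‖(L:ℂ) * (L':ℂ)‖ = (L:ℝ) * (L':ℝ) := by
      rw [norm_mul]
      rw [Complex.norm_natCast, Complex.norm_natCast]
    rw [hn, div_le_iff₀ (by positivity)]
    calc ‖(L':ℂ) * S a L M' - (L:ℂ) * S a L' M'‖ ≤ L' * (L * ε + B) + L * (L' * ε + B) := key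
      _ = (2 * ε + B / L + B / L') * (L * L') := by field_simp; ring
  calc ‖avg a L M - avg a L' M'‖
      ≤ ‖avg a L M - avg a L M'‖ + ‖avg a L M' - avg a L' M'‖ :=
        norm_sub_le_norm_sub_add_norm_sub _ _ _
    _ ≤ (ε + B / L) + (2 * ε + B / L + B / L') := add_le_add step1 step2
    _ = 3 * ε + 2 * B / L + B / L' := by ring

lemma main_est
    (hcpt : IsCompact (closure
      {b : BoundedContinuousFunction ℤ ℂ | ∃ k : ℤ, ∀ n : ℤ, b n = a (n + k)}))
    {ε : ℝ} (hε : 0 < ε) :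
    ∃ ℓ₀ : ℕ, 1 ≤ ℓ₀ ∧ ∀ L L' : ℕ, ℓ₀ ≤ L → ℓ₀ ≤ L' → ∀ M M' : ℤ,
      ‖avg a L M - avg a L' M'‖ ≤ ε := by
  have hε6 : 0 < ε / 6 := by linarith
  obtain ⟨C₀, hsyn₀⟩ := syndetic a hcpt hε6
  set C := max C₀ 0 with hCdef
  have hC : 0 ≤ C := le_max_right _ _
  have hsyn : ∀ m : ℤ, ∃ p : ℤ, |((m - p : ℤ) : ℝ)| ≤ C ∧
      ∀ n : ℤ, ‖a (n + p) - a n‖ ≤ ε / 6 := by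
    intro m
    obtain ⟨p, hp, hap⟩ := hsyn₀ m
    exact ⟨p, hp.trans (le_max_left _ _), hap⟩
  set B := 2 * ‖a‖ * C with hBdef
  have hB0 : 0 ≤ B := by positivity
  refine ⟨max 1 ⌈B / (ε / 6)⌉₊, le_max_left _ _, fun L L' hL hL' M M' => ?_⟩
  have h1L : 1 ≤ L := le_trans (le_max_left _ _) hL
  have h1L' : 1 ≤ L' := le_trans (le_max_left _ _) hL'
  have hLpos : (0:ℝ) < L := by exact_mod_cast h1L
  have hL'pos : (0:ℝ) < L' := by exact_mod_cast h1L'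
  have hBL : B / L ≤ ε / 6 := by
    rw [div_le_iff₀ hLpos]
    have h2 : B / (ε / 6) ≤ (L : ℝ) := by
      calc B / (ε / 6) ≤ (⌈B / (ε / 6)⌉₊ : ℝ) := Nat.le_ceil _
        _ ≤ (L : ℝ) := by exact_mod_cast (le_max_right 1 _).trans hL
    calc B = (B / (ε / 6)) * (ε / 6) := by field_simp
      _ ≤ (L : ℝ) * (ε / 6) := mul_le_mul_of_nonneg_right h2 hε6.le
      _ = ε / 6 * L := by ring
  have hBL' : B / L' ≤ ε / 6 := by
    rw [div_le_iff₀ hL'pos]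
    have h2 : B / (ε / 6) ≤ (L' : ℝ) := by
      calc B / (ε / 6) ≤ (⌈B / (ε / 6)⌉₊ : ℝ) := Nat.le_ceil _
        _ ≤ (L' : ℝ) := by exact_mod_cast (le_max_right 1 _).trans hL'
    calc B = (B / (ε / 6)) * (ε / 6) := by field_simp
      _ ≤ (L' : ℝ) * (ε / 6) := mul_le_mul_of_nonneg_right h2 hε6.le
      _ = ε / 6 * L' := by ring
  calc ‖avg a L M - avg a L' M'‖
      ≤ 3 * (ε / 6) + 2 * B / L + B / L' :=
        avg_cmp a hε6.le hC hsyn L L' h1L h1L' M M'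
    _ = 3 * (ε / 6) + 2 * (B / L) + B / L' := by ring
    _ ≤ 3 * (ε / 6) + 2 * (ε / 6) + ε / 6 := by
        have := hBL
        have := hBL'
        gcongr
    _ = ε := by ring

lemma sum_Icc_eq (f : ℤ → ℂ) (M N : ℤ) (h : M ≤ N) :
    ∑ n ∈ Finset.Icc M N, f n = ∑ i ∈ Finset.range (N - M + 1).toNat, f (M + i) := by
  refine Finset.sum_nbij' (fun n => (n - M).toNat) (fun i => M + (i : ℤ)) ?_ ?_ ?_ ?_ ?_
  · intro n hn
    simp only [Finset.mem_Icc] at hn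
    simp only [Finset.mem_range]
    omega
  · intro i hi
    simp only [Finset.mem_range] at hi
    simp only [Finset.mem_Icc]
    omega
  · intro n hn
    simp only [Finset.mem_Icc] at hn
    omega
  · intro i hi
    simp only [Finset.mem_range] at hi
    omega
  · intro n hn
    simp only [Finset.mem_Icc] at hn
    congr 1
    omega

end
end Stmt10

open Stmt10 in
/-- If `a` is a bounded complex sequence whose family of shifts `{σᵏa : k ∈ ℤ}` is relatively
compact in `ℓ^∞(ℤ)`, then for every sequence of intervals of `ℤ` whose lengths tend to infinity
the averages of `a` over the intervals converge, and the limit does not depend on the choice of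
the sequence of intervals. -/
theorem stmt10 (a : BoundedContinuousFunction ℤ ℂ)
    (hcpt : IsCompact (closure
      {b : BoundedContinuousFunction ℤ ℂ | ∃ k : ℤ, ∀ n : ℤ, b n = a (n + k)})) :
    ∃ L : ℂ, ∀ M N : ℕ → ℤ, (∀ j, M j ≤ N j) →
      Tendsto (fun j => N j - M j) atTop atTop →
      Tendsto (fun j => (∑ n ∈ Finset.Icc (M j) (N j), a n) / ((N j - M j + 1 : ℤ) : ℂ))
        atTop (𝓝 L) := by
  classical
  set u : ℕ → ℂ := fun j => avg a (j + 1) 0 with hu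
  have hcauchy : CauchySeq u := by
    rw [Metric.cauchySeq_iff]
    intro ε hε
    obtain ⟨ℓ₀, hℓ₀, hest⟩ := main_est a hcpt (half_pos hε)
    refine ⟨ℓ₀, fun m hm n hn => ?_⟩
    have : dist (u m) (u n) ≤ ε / 2 := by
      rw [dist_eq_norm]
      exact hest (m+1) (n+1) (by omega) (by omega) 0 0
    linarith
  obtain ⟨Λ, hΛ⟩ := cauchySeq_tendsto_of_complete hcauchy
  refine ⟨Λ, fun M N hMN hlen => ?_⟩
  rw [Metric.tendsto_atTop]
  intro ε hε
  have hε3 : 0 < ε / 3 := by linarith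
  obtain ⟨ℓ₀, hℓ₀, hest⟩ := main_est a hcpt hε3
  obtain ⟨i₀, hi₀⟩ := (Metric.tendsto_atTop.mp hΛ) (ε / 3) hε3
  set i := max i₀ ℓ₀ with hi
  have hui : dist (u i) Λ < ε / 3 := hi₀ i (le_max_left _ _)
  obtain ⟨J, hJ⟩ := (tendsto_atTop_atTop.mp hlen) (ℓ₀ : ℤ)
  refine ⟨J, fun j hj => ?_⟩
  have hlenj : (ℓ₀ : ℤ) ≤ N j - M j := hJ j hj
  set Lj := (N j - M j + 1).toNat with hLj
  have hLjge : ℓ₀ ≤ Lj := by omega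
  have hterm : (∑ n ∈ Finset.Icc (M j) (N j), a n) / ((N j - M j + 1 : ℤ) : ℂ)
      = avg a Lj (M j) := by
    rw [avg, S, sum_Icc_eq a (M j) (N j) (hMN j)]
    congr 1
    rw [hLj]
    have hnn : ((N j - M j + 1).toNat : ℤ) = N j - M j + 1 := Int.toNat_of_nonneg (by omega)
    exact_mod_cast hnn.symm
  rw [hterm]
  calc dist (avg a Lj (M j)) Λ
      ≤ dist (avg a Lj (M j)) (u i) + dist (u i) Λ := dist_triangle _ _ _
    _ < ε / 3 + ε / 3 + ε / 3 := by
        have h1 : dist (avg a Lj (M j)) (u i) ≤ ε / 3 := by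
          rw [dist_eq_norm]
          exact hest Lj (i + 1) hLjge (by omega) (M j) 0
        linarith
    _ = ε := by ring
end

section
/- Let E ⊆ ℤ be syndetic with constant L, i.e. ⋃_{j=0}^{L-1} (j + E) = ℤ. If t ∈ ℝ/ℤ satisfies |e(nt) - 1| < 1/(3L) for all n ∈ E and ‖t‖ < 1/(3L), then t = 0. -/
open Real

/-- `|e^{ix} - 1|` is at least `2|x|/π` for `|x| ≤ π`. -/
lemma aux_exp_lb (x : ℝ) (hx : |x| ≤ π) :
    2 / π * |x| ≤ ‖(Circle.exp x : ℂ) - 1‖ := by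
  have hπ : (0:ℝ) < π := Real.pi_pos
  have hsq : ‖(Circle.exp x : ℂ) - 1‖ ^ 2 = 2 - 2 * Real.cos x := by
    rw [Complex.sq_norm, Circle.coe_exp, Complex.normSq_apply]
    simp [Complex.exp_ofReal_mul_I_re, Complex.exp_ofReal_mul_I_im]
    nlinarith [Real.sin_sq_add_cos_sq x]
  have hcos : Real.cos x ≤ 1 - 2 / π ^ 2 * x ^ 2 := Real.cos_le_one_sub_mul_cos_sq hx
  have h0 : (0:ℝ) ≤ ‖(Circle.exp x : ℂ) - 1‖ := norm_nonneg _
  have hA2 : (2 / π * |x|) ^ 2 ≤ ‖(Circle.exp x : ℂ) - 1‖ ^ 2 := by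
    rw [hsq]
    have he : (2 / π * |x|) ^ 2 = 4 / π ^ 2 * x ^ 2 := by
      rw [mul_pow, sq_abs, div_pow]; ring
    rw [he]
    have h2 : 4 / π ^ 2 * x ^ 2 = 2 * (2 / π ^ 2 * x ^ 2) := by ring
    rw [h2]; linarith [hcos]
  have hc : (0:ℝ) ≤ 2 / π * |x| := by positivity
  nlinarith [hA2, h0, hc]

/-- On `ℝ/ℤ`, `4‖s‖ ≤ |e(s) - 1|`. -/
lemma aux_norm_le (s : AddCircle (1 : ℝ)) :
    4 * ‖s‖ ≤ ‖(AddCircle.toCircle s : ℂ) - 1‖ := by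
  have hπ : (0:ℝ) < π := Real.pi_pos
  induction s using QuotientAddGroup.induction_on with
  | H x =>
    set y : ℝ := x - round x with hy
    have hxy : (x : AddCircle (1:ℝ)) = (y : AddCircle (1:ℝ)) := by
      rw [hy]
      have : ((round x : ℝ) : AddCircle (1:ℝ)) = 0 := by
        rw [AddCircle.coe_eq_zero_iff]
        exact ⟨round x, by simp⟩
      push_cast
      rw [sub_eq_add_neg, AddCircle.coe_add, AddCircle.coe_neg, this]
      simp
    have hnorm : ‖(x : AddCircle (1:ℝ))‖ = |y| := by
      rw [AddCircle.norm_eq]; simp [hy]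
    have hy2 : |y| ≤ 1 / 2 := by simpa [hy] using abs_sub_round x
    rw [hxy] at hnorm ⊢
    rw [AddCircle.toCircle_apply_mk, hnorm]
    have harg : |2 * π / 1 * y| ≤ π := by
      rw [abs_mul]
      have : |2 * π / 1| = 2 * π := by rw [abs_of_pos]; ring; positivity
      rw [this]; nlinarith
    have := aux_exp_lb (2 * π / 1 * y) harg
    have he : 2 / π * |2 * π / 1 * y| = 4 * |y| := by
      rw [abs_mul]
      have : |2 * π / 1| = 2 * π := by rw [abs_of_pos]; ring; positivity
      rw [this]; field_simp; ring
    linarith [he ▸ this]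

/-- Lower bound for the norm of a small representative. -/
lemma aux_norm_ge (y : ℝ) (hy : |y| ≤ 1 / 2) : |y| ≤ ‖(y : AddCircle (1:ℝ))‖ := by
  rw [AddCircle.norm_eq]
  simp only [inv_one, one_mul, mul_one]
  rcases eq_or_ne (round y) 0 with h | h
  · simp [h]
  · have h1' : (1:ℤ) ≤ |round y| := Int.one_le_abs h
    have h1 : (1:ℝ) ≤ |(round y : ℝ)| := by
      rw [← Int.cast_abs]; exact_mod_cast h1'
    have := abs_sub_abs_le_abs_sub (round y : ℝ) y
    rw [abs_sub_comm] at this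
    linarith

/-- Let `E ⊆ ℤ` be syndetic with constant `L`, i.e. `⋃_{j=0}^{L-1} (j + E) = ℤ`. If
`t ∈ ℝ/ℤ` satisfies `|e(nt) - 1| < 1/(3L)` for all `n ∈ E` and `‖t‖ < 1/(3L)`, then `t = 0`. -/
theorem stmt11 (L : ℕ) (hL : 0 < L) (E : Set ℤ)
    (hsyn : ∀ n : ℤ, ∃ j : ℤ, 0 ≤ j ∧ j < L ∧ n - j ∈ E)
    (t : AddCircle (1 : ℝ))
    (h1 : ∀ n ∈ E, ‖(AddCircle.toCircle (n • t) : ℂ) - 1‖ < 1 / (3 * L))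
    (h2 : ‖t‖ < 1 / (3 * L)) :
    t = 0 := by
  by_contra ht
  obtain ⟨z, rfl⟩ := QuotientAddGroup.mk_surjective t
  set x : ℝ := z - round z with hxdef
  have hxy : (z : AddCircle (1:ℝ)) = (x : AddCircle (1:ℝ)) := by
    rw [hxdef]
    have h0 : ((round z : ℝ) : AddCircle (1:ℝ)) = 0 := by
      rw [AddCircle.coe_eq_zero_iff]
      exact ⟨round z, by simp⟩
    push_cast
    rw [sub_eq_add_neg, AddCircle.coe_add, AddCircle.coe_neg, h0]
    simp
  have hnorm : ‖(z : AddCircle (1:ℝ))‖ = |x| := by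
    rw [AddCircle.norm_eq]; simp [hxdef]
  set a : ℝ := |x| with hadef
  have hL' : (0:ℝ) < L := by exact_mod_cast hL
  have ha_lt : a < 1 / (3 * L) := hnorm ▸ h2
  have hx0 : x ≠ 0 := fun hx0 => ht (by rw [hxy, hx0]; simp)
  have ha_pos : 0 < a := abs_pos.mpr hx0
  have haL : L * a < 1 / 3 := by
    rw [div_mul_eq_div_div] at ha_lt
    calc (L:ℝ) * a < L * (1/3 / L) := by
          exact mul_lt_mul_of_pos_left ha_lt hL'
      _ = 1/3 := by field_simp
  -- choose n with n * a close to 1/2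
  set n : ℕ := ⌊1 / (2 * a)⌋₊ with hndef
  have hn1 : (n:ℝ) ≤ 1 / (2 * a) := Nat.floor_le (by positivity)
  have hn2 : 1 / (2 * a) < n + 1 := Nat.lt_floor_add_one _
  have hna_le : (n:ℝ) * a ≤ 1 / 2 := by
    calc (n:ℝ) * a ≤ (1 / (2 * a)) * a := by
          exact mul_le_mul_of_nonneg_right hn1 ha_pos.le
      _ = 1 / 2 := by field_simp
  have hna_gt : 1 / 2 - a < (n:ℝ) * a := by
    have h := mul_lt_mul_of_pos_right hn2 ha_pos
    have h2a : 1 / (2 * a) * a = 1/2 := by field_simp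
    nlinarith [h, h2a]
  -- norm of n • t
  have hnt : ((n:ℤ) • ((z : AddCircle (1:ℝ)))) = (((n:ℝ) * x : ℝ) : AddCircle (1:ℝ)) := by
    rw [hxy, ← AddCircle.coe_zsmul]
    norm_num
  have hlow : (n:ℝ) * a ≤ ‖(n:ℤ) • ((z : AddCircle (1:ℝ)))‖ := by
    rw [hnt]
    have habs : |(n:ℝ) * x| = (n:ℝ) * a := by
      rw [abs_mul, Nat.abs_cast]
    calc (n:ℝ) * a = |(n:ℝ) * x| := habs.symm
      _ ≤ _ := aux_norm_ge _ (by rw [habs]; exact hna_le)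
  -- decompose n = j + m
  obtain ⟨j, hj0, hjL, hmE⟩ := hsyn (n : ℤ)
  set m : ℤ := (n : ℤ) - j with hmdef
  have hsplit : ((n:ℤ) • ((z : AddCircle (1:ℝ)))) = j • ((z : AddCircle (1:ℝ))) + m • ((z : AddCircle (1:ℝ))) := by
    rw [hmdef, ← add_zsmul]; ring_nf
  have hjt : ‖j • ((z : AddCircle (1:ℝ)))‖ ≤ (L - 1 : ℝ) * a := by
    calc ‖j • ((z : AddCircle (1:ℝ)))‖ ≤ ‖j‖ * ‖(z : AddCircle (1:ℝ))‖ := norm_zsmul_le _ _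
      _ = |(j:ℝ)| * a := by rw [hnorm, Int.norm_eq_abs]
      _ ≤ (L - 1 : ℝ) * a := by
          apply mul_le_mul_of_nonneg_right _ (abs_nonneg x)
          rw [abs_of_nonneg (by exact_mod_cast hj0 : (0:ℝ) ≤ (j:ℝ))]
          have : j ≤ (L:ℤ) - 1 := by omega
          exact_mod_cast this
  have hmt : ‖m • ((z : AddCircle (1:ℝ)))‖ < 1 / (12 * L) := by
    have h4 := aux_norm_le (m • ((z : AddCircle (1:ℝ))))
    have := h1 m hmE
    have h5 : 4 * ‖m • ((z : AddCircle (1:ℝ)))‖ < 1 / (3 * L) := lt_of_le_of_lt h4 this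
    have heq : 1 / (3 * (L:ℝ)) / 4 = 1 / (12 * L) := by
      rw [div_div]; congr 1; ring
    linarith [heq ▸ (by linarith : ‖m • ((z : AddCircle (1:ℝ)))‖ < 1 / (3 * (L:ℝ)) / 4)]
  have htri : ‖(n:ℤ) • ((z : AddCircle (1:ℝ)))‖ ≤ (L - 1 : ℝ) * a + 1 / (12 * L) := by
    rw [hsplit]
    calc ‖_ + _‖ ≤ ‖j • ((z : AddCircle (1:ℝ)))‖ + ‖m • ((z : AddCircle (1:ℝ)))‖ := norm_add_le _ _
      _ ≤ (L - 1 : ℝ) * a + 1 / (12 * L) := by linarith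
  have h1L : (1:ℝ) ≤ L := by exact_mod_cast hL
  have hLinv : 1 / (12 * (L:ℝ)) ≤ 1 / 12 := by
    apply div_le_div_of_nonneg_left (by norm_num) (by norm_num)
    linarith
  linarith [hlow, htri, hna_gt, haL, ha_pos, hLinv]
end

section
/- The sequence (e(⌊nα⌋β))_{n∈ℤ}, where α and β are real numbers rationally independent together with 1 (i.e. 1, α, β are linearly independent over ℚ), is not almost periodic: the set of its shifts is not relatively compact in ℓ^∞(ℤ). -/
open scoped Real

/-- The exponential `e(t) = exp(2πit)` with values in `ℂ`. -/
noncomputable def eX (t : ℝ) : ℂ := Complex.exp (2 * π * Complex.I * t)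

lemma eX_zero : eX 0 = 1 := by simp [eX]

lemma eX_add (s t : ℝ) : eX (s + t) = eX s * eX t := by
  simp [eX, mul_add, Complex.exp_add]

lemma norm_eX (t : ℝ) : ‖eX t‖ = 1 := by
  simp [eX, Complex.norm_exp]

/-- The shifted sequence as a bounded continuous function. -/
noncomputable def Fseq (α β : ℝ) (k : ℤ) : BoundedContinuousFunction ℤ ℂ :=
  BoundedContinuousFunction.mkOfBound
    ⟨fun n : ℤ => eX ((⌊((n + k : ℤ) : ℝ) * α⌋ : ℝ) * β), continuous_of_discreteTopology⟩ 2
    (by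
      intro x y
      rw [dist_eq_norm]
      calc ‖_ - _‖ ≤ ‖eX ((⌊((x + k : ℤ) : ℝ) * α⌋ : ℝ) * β)‖ +
            ‖eX ((⌊((y + k : ℤ) : ℝ) * α⌋ : ℝ) * β)‖ := norm_sub_le _ _
        _ = 2 := by rw [norm_eX, norm_eX]; norm_num)

lemma Fseq_apply (α β : ℝ) (k n : ℤ) :
    Fseq α β k n = eX ((⌊((n + k : ℤ) : ℝ) * α⌋ : ℝ) * β) := rfl

/-- Separation of distinct shifts. -/
lemma sep (α β : ℝ)
    (hind : ∀ k₀ k₁ k₂ : ℤ, (k₁ : ℝ) * α + (k₂ : ℝ) * β = (k₀ : ℝ) →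
      k₀ = 0 ∧ k₁ = 0 ∧ k₂ = 0)
    {k j : ℤ} (hkj : k ≠ j) :
    ‖eX β - 1‖ ≤ 2 * dist (Fseq α β k) (Fseq α β j) := by
  set d : ℤ := k - j with hd
  have hd0 : d ≠ 0 := sub_ne_zero.mpr hkj
  set m : ℤ := ⌊(d : ℝ) * α⌋ with hm
  -- d * α is not an integer
  have hnotint : (d : ℝ) * α ≠ (m : ℝ) := by
    intro h
    have := hind m d 0 (by push_cast; linarith)
    exact hd0 this.2.1
  have hfloorneg : ⌊((-d : ℤ) : ℝ) * α⌋ = -m - 1 := by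
    rw [Int.floor_eq_iff]
    have h1 : (m : ℝ) ≤ (d : ℝ) * α := Int.floor_le _
    have h2 : (m : ℝ) < (d : ℝ) * α := lt_of_le_of_ne h1 (fun h => hnotint h.symm)
    have h3 : (d : ℝ) * α < (m : ℝ) + 1 := Int.lt_floor_add_one _
    constructor
    · push_cast; linarith
    · push_cast; linarith
  -- value at n = -j
  have hA : ‖eX ((m : ℝ) * β) - 1‖ ≤ dist (Fseq α β k) (Fseq α β j) := by
    have h := BoundedContinuousFunction.dist_coe_le_dist (f := Fseq α β k)
      (g := Fseq α β j) (-j)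
    rw [dist_eq_norm] at h
    have e1 : Fseq α β k (-j) = eX ((m : ℝ) * β) := by
      rw [Fseq_apply]
      congr 2
      have : -j + k = d := by omega
      rw [this]
    have e2 : Fseq α β j (-j) = 1 := by
      rw [Fseq_apply]
      have : -j + j = (0 : ℤ) := by omega
      rw [this]
      simpa using eX_zero
    rwa [e1, e2] at h
  -- value at n = -k
  have hB : ‖eX (((-m - 1 : ℤ) : ℝ) * β) - 1‖ ≤ dist (Fseq α β k) (Fseq α β j) := by
    have h := BoundedContinuousFunction.dist_coe_le_dist (f := Fseq α β j)
      (g := Fseq α β k) (-k)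
    rw [dist_eq_norm, dist_comm] at h
    have e1 : Fseq α β j (-k) = eX (((-m - 1 : ℤ) : ℝ) * β) := by
      rw [Fseq_apply]
      have h1 : -k + j = -d := by omega
      rw [h1, hfloorneg]
    have e2 : Fseq α β k (-k) = 1 := by
      rw [Fseq_apply]
      have : -k + k = (0 : ℤ) := by omega
      rw [this]
      simpa using eX_zero
    rwa [e1, e2] at h
  -- rewrite hB : ‖eX((-m-1)β) - 1‖ = ‖eX((m+1)β) - 1‖
  have hBB : ‖eX (((m + 1 : ℤ) : ℝ) * β) - 1‖ ≤ dist (Fseq α β k) (Fseq α β j) := by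
    have key : eX (((m + 1 : ℤ) : ℝ) * β) * (eX (((-m - 1 : ℤ) : ℝ) * β) - 1)
        = 1 - eX (((m + 1 : ℤ) : ℝ) * β) := by
      rw [mul_sub, ← eX_add, mul_one]
      have : ((m + 1 : ℤ) : ℝ) * β + ((-m - 1 : ℤ) : ℝ) * β = 0 := by push_cast; ring
      rw [this, eX_zero]
    have hnorm : ‖eX (((m + 1 : ℤ) : ℝ) * β) - 1‖
        = ‖eX (((-m - 1 : ℤ) : ℝ) * β) - 1‖ := by
      calc ‖eX (((m + 1 : ℤ) : ℝ) * β) - 1‖ = ‖1 - eX (((m + 1 : ℤ) : ℝ) * β)‖ := by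
            rw [norm_sub_rev]
        _ = ‖eX (((m + 1 : ℤ) : ℝ) * β) * (eX (((-m - 1 : ℤ) : ℝ) * β) - 1)‖ := by
            rw [key]
        _ = ‖eX (((-m - 1 : ℤ) : ℝ) * β) - 1‖ := by rw [norm_mul, norm_eX, one_mul]
    rwa [hnorm]
  -- conclude: ‖eX β - 1‖ = ‖eX((m+1)β) - eX(mβ)‖ ≤ sum
  have hsplit : eX (((m + 1 : ℤ) : ℝ) * β) = eX ((m : ℝ) * β) * eX β := by
    rw [← eX_add]
    congr 1
    push_cast
    ring
  have hfinal : ‖eX β - 1‖ ≤ ‖eX (((m + 1 : ℤ) : ℝ) * β) - 1‖ + ‖eX ((m : ℝ) * β) - 1‖ := by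
    have h1 : ‖eX β - 1‖ = ‖eX (((m + 1 : ℤ) : ℝ) * β) - eX ((m : ℝ) * β)‖ := by
      rw [hsplit, ← mul_one (eX ((m : ℝ) * β)), mul_assoc, ← mul_sub, norm_mul, norm_eX,
        one_mul]
      simp
    rw [h1]
    calc ‖eX (((m + 1 : ℤ) : ℝ) * β) - eX ((m : ℝ) * β)‖
        = ‖(eX (((m + 1 : ℤ) : ℝ) * β) - 1) - (eX ((m : ℝ) * β) - 1)‖ := by ring_nf
      _ ≤ _ := norm_sub_le _ _
  linarith

set_option synthInstance.maxHeartbeats 1000000 in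
/-- If `1, α, β` are linearly independent over `ℚ`, then the sequence `(e(⌊nα⌋β))_{n∈ℤ}` is
not almost periodic: the set of its shifts is not relatively compact in `ℓ^∞(ℤ)`. -/
theorem stmt12 (α β : ℝ)
    (hind : ∀ k₀ k₁ k₂ : ℤ, (k₁ : ℝ) * α + (k₂ : ℝ) * β = (k₀ : ℝ) →
      k₀ = 0 ∧ k₁ = 0 ∧ k₂ = 0) :
    ¬ IsCompact (closure
      {c : BoundedContinuousFunction ℤ ℂ |
        ∃ k : ℤ, ∀ n : ℤ, c n = eX ((⌊((n + k : ℤ) : ℝ) * α⌋ : ℝ) * β)}) := by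
  intro hC
  set δ : ℝ := ‖eX β - 1‖ with hδdef
  have hδ : 0 < δ := by
    rw [hδdef, norm_pos_iff, sub_ne_zero]
    intro h
    have : ∃ n : ℤ, (2 * π * Complex.I * β : ℂ) = n * (2 * π * Complex.I) := by
      rw [← Complex.exp_eq_one_iff]
      exact h
    obtain ⟨n, hn⟩ := this
    have hπ : (π : ℂ) ≠ 0 := by exact_mod_cast Real.pi_ne_zero
    have h2πI : (2 * π * Complex.I : ℂ) ≠ 0 := by
      simp [hπ, Complex.I_ne_zero]
    have hβn : (β : ℂ) = (n : ℂ) := by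
      apply mul_left_cancel₀ h2πI
      rw [hn]; ring
    have hβn' : β = (n : ℝ) := by exact_mod_cast hβn
    have := hind n 0 1 (by push_cast; linarith)
    simp at this
  -- the sequence of shifts lies in the closure
  have hmem : ∀ N : ℕ, Fseq α β N ∈ closure
      {c : BoundedContinuousFunction ℤ ℂ |
        ∃ k : ℤ, ∀ n : ℤ, c n = eX ((⌊((n + k : ℤ) : ℝ) * α⌋ : ℝ) * β)} := by
    intro N
    exact subset_closure ⟨(N : ℤ), fun n => rfl⟩
  obtain ⟨x, -, φ, hφ, hconv⟩ := hC.tendsto_subseq hmem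
  have hcauchy : CauchySeq (fun N : ℕ => Fseq α β (φ N)) := hconv.cauchySeq
  rw [Metric.cauchySeq_iff] at hcauchy
  obtain ⟨N, hN⟩ := hcauchy (δ / 2) (by linarith)
  have hlt := hN (N + 1) (by omega) N (by omega)
  have hne : ((φ (N + 1) : ℤ)) ≠ ((φ N : ℤ)) := by
    have := hφ (Nat.lt_succ_self N)
    exact_mod_cast Nat.ne_of_gt this
  have hsep := sep α β hind hne
  linarith
end
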